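/- For all α > 1, σ > 0, a > 0 and reals θ, c, with Δ(u) = Φ((a−u)/σ) − Φ((−a−u)/σ), one has Δ(θ+c)^{α−1} · Δ(θ+(1−α)c) ≤ Δ(θ)^α. Equivalently, the Rényi divergence of order α between the truncated Gaussians N^T(θ, σ², [−a,a]) and N^T(θ+c, σ², [−a,a]), namely α·c²/(2σ²) + log(Δ(θ+c)/Δ(θ)) + (1/(α−1))·log(Δ(θ+(1−α)c)/Δ(θ)), is at most α·c²/(2σ²), the Rényi divergence of order α between the Gaussians N(θ,σ²) and N(θ+c,σ²). -/

import Mathlib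

open MeasureTheory Real Filter

/-- Standard Gaussian density. -/
noncomputable def phi (x : ℝ) : ℝ := (Real.sqrt (2 * Real.pi))⁻¹ * Real.exp (-(x ^ 2) / 2)

/-- Standard Gaussian cumulative distribution function. -/
noncomputable def Phi (x : ℝ) : ℝ := ∫ t in Set.Iic x, phi t

/-- Mass of the Gaussian `N(u, σ²)` on `[−a, a]`. -/
noncomputable def Δ (a σ u : ℝ) : ℝ := Phi ((a - u) / σ) - Phi ((-a - u) / σ)

lemma phi_pos (x : ℝ) : 0 < phi x := by
  have h : 0 < Real.sqrt (2 * Real.pi) := Real.sqrt_pos.2 (by positivity)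
  unfold phi; positivity

@[fun_prop] lemma phi_cont : Continuous phi := by
  unfold phi; fun_prop

lemma phi_integrable : Integrable phi := by
  have h := (integrable_exp_neg_mul_sq (show (0:ℝ) < 1/2 by norm_num)).const_mul
      (Real.sqrt (2 * Real.pi))⁻¹
  refine h.congr (Filter.Eventually.of_forall fun x => ?_)
  simp only [phi]
  ring_nf

lemma phi_hasDeriv (x : ℝ) : HasDerivAt phi (-x * phi x) x := by
  have h1 : HasDerivAt (fun t : ℝ => -(t ^ 2) / 2) (-x) x := by
    have h := ((hasDerivAt_pow 2 x).neg).div_const 2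
    refine h.congr_deriv ?_
    push_cast; ring
  have h2 := (h1.exp).const_mul (Real.sqrt (2 * Real.pi))⁻¹
  refine h2.congr_deriv ?_
  simp only [phi]; ring

lemma Phi_sub (b x : ℝ) : Phi x - Phi b = ∫ t in b..x, phi t :=
  intervalIntegral.integral_Iic_sub_Iic phi_integrable.integrableOn phi_integrable.integrableOn

lemma Phi_hasDeriv (x : ℝ) : HasDerivAt Phi (phi x) x := by
  have h : HasDerivAt (fun u => ∫ t in (0:ℝ)..u, phi t) (phi x) x :=
    intervalIntegral.integral_hasDerivAt_right (phi_integrable.intervalIntegrable)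
      (phi_cont.stronglyMeasurable.stronglyMeasurableAtFilter) phi_cont.continuousAt
  have e : Phi = fun u => Phi 0 + ∫ t in (0:ℝ)..u, phi t := by
    funext u; rw [← Phi_sub 0 u]; ring
  rw [e]
  simpa using h.const_add (Phi 0)

lemma key_ineq {l r : ℝ} (h : l < r) :
    (l * phi l - r * phi r) * (Phi r - Phi l) ≤ (phi l - phi r) ^ 2 := by
  have hint : ∀ f : ℝ → ℝ, Continuous f → IntervalIntegrable f volume l r :=
    fun f hf => hf.intervalIntegrable l r
  set D := ∫ t in l..r, phi t with hDdef
  have hD : 0 < D := by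
    refine intervalIntegral.intervalIntegral_pos_of_pos_on (hint _ phi_cont)
      (fun x _ => phi_pos x) h
  have hPD : Phi r - Phi l = D := Phi_sub l r
  -- M = ∫ t φ(t)
  have hM : ∫ t in l..r, t * phi t = phi l - phi r := by
    rw [intervalIntegral.integral_eq_sub_of_hasDerivAt
      (f := fun t => -phi t) (fun x _ => (phi_hasDeriv x).neg.congr_deriv (by ring))
      (hint _ (by fun_prop))]
    ring
  set M := phi l - phi r with hMdef
  set m := M / D with hmdef
  have hmD : m * D = M := div_mul_cancel₀ _ hD.ne'
  -- bounds on the mean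
  have hMub : M ≤ r * D := by
    rw [← hM, hDdef, ← intervalIntegral.integral_const_mul]
    refine intervalIntegral.integral_mono_on h.le (hint _ (by fun_prop))
      (hint _ (by fun_prop)) (fun x hx => ?_)
    exact mul_le_mul_of_nonneg_right hx.2 (phi_pos x).le
  have hMlb : l * D ≤ M := by
    rw [← hM, hDdef, ← intervalIntegral.integral_const_mul]
    refine intervalIntegral.integral_mono_on h.le (hint _ (by fun_prop))
      (hint _ (by fun_prop)) (fun x hx => ?_)
    exact mul_le_mul_of_nonneg_right hx.1 (phi_pos x).le
  have hml : l ≤ m := (le_div_iff₀ hD).2 hMlb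
  have hmr : m ≤ r := (div_le_iff₀ hD).2 hMub
  -- integration by parts identity
  have hIBP : ∫ t in l..r, ((t - m) * (t * phi t) - phi t)
      = (l - m) * phi l - (r - m) * phi r := by
    rw [intervalIntegral.integral_eq_sub_of_hasDerivAt
      (f := fun t => -((t - m) * phi t)) (fun x _ => ?_) (hint _ (by fun_prop))]
    · ring
    · have h1 : HasDerivAt (fun t : ℝ => t - m) 1 x := (hasDerivAt_id x).sub_const m
      have h2 := (h1.mul (phi_hasDeriv x)).neg
      refine h2.congr_deriv ?_
      ring
  set V := ∫ t in l..r, (t - m) ^ 2 * phi t with hVdef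
  have hsplit : ∫ t in l..r, ((t - m) * (t * phi t) - phi t)
      = (V + (m * (∫ t in l..r, t * phi t) - m * m * D)) - D := by
    have e : (fun t : ℝ => (t - m) * (t * phi t) - phi t)
        = fun t => ((t - m) ^ 2 * phi t + (m * (t * phi t) - m * m * phi t)) - phi t := by
      funext t; ring
    rw [intervalIntegral.integral_congr (g := fun t => ((t - m) ^ 2 * phi t
        + (m * (t * phi t) - m * m * phi t)) - phi t) (fun x _ => by ring),
      intervalIntegral.integral_sub (by exact ((hint _ (by fun_prop)).add
        ((hint _ (by fun_prop)).sub (hint _ (by fun_prop)))) ) (hint _ (by fun_prop)),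
      intervalIntegral.integral_add (hint _ (by fun_prop))
        ((hint _ (by fun_prop)).sub (hint _ (by fun_prop))),
      intervalIntegral.integral_sub (hint _ (by fun_prop)) (hint _ (by fun_prop)),
      intervalIntegral.integral_const_mul, intervalIntegral.integral_const_mul]
  have hV : V = D + (l - m) * phi l - (r - m) * phi r := by
    have := hIBP
    rw [hsplit, hM] at this
    have hmM : m * M = m * m * D := by rw [← hmD]; ring
    linarith
  have hVle : V ≤ D := by
    have h1 : (l - m) * phi l ≤ 0 :=
      mul_nonpos_of_nonpos_of_nonneg (by linarith) (phi_pos l).le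
    have h2 : 0 ≤ (r - m) * phi r :=
      mul_nonneg (by linarith) (phi_pos r).le
    linarith
  -- conclude
  rw [hPD]
  have hId : l * phi l - r * phi r = V - D + m * M := by
    have : m * (phi l - phi r) = m * M := by rw [hMdef]
    linarith [hV]
  calc (l * phi l - r * phi r) * D = (V - D) * D + m * M * D := by rw [hId]; ring
    _ ≤ m * M * D := by nlinarith
    _ = M ^ 2 := by rw [mul_comm m M, mul_assoc, hmD]; ring
  

lemma lr_lt {σ a : ℝ} (hσ : 0 < σ) (ha : 0 < a) (u : ℝ) :
    (-a - u) / σ < (a - u) / σ :=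
  (div_lt_div_iff_of_pos_right hσ).2 (by linarith)

lemma delta_pos {σ a : ℝ} (hσ : 0 < σ) (ha : 0 < a) (u : ℝ) : 0 < Δ a σ u := by
  have h := lr_lt hσ ha u
  rw [Δ, Phi_sub]
  exact intervalIntegral.intervalIntegral_pos_of_pos_on
    (phi_cont.intervalIntegrable _ _) (fun x _ => phi_pos x) h

lemma delta_hasDeriv {σ a : ℝ} (hσ : 0 < σ) (u : ℝ) :
    HasDerivAt (fun u => Δ a σ u)
      ((phi ((-a - u) / σ) - phi ((a - u) / σ)) / σ) u := by
  have hr : HasDerivAt (fun u : ℝ => (a - u) / σ) (-1 / σ) u :=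
    ((hasDerivAt_id u).const_sub a).div_const σ
  have hl : HasDerivAt (fun u : ℝ => (-a - u) / σ) (-1 / σ) u :=
    ((hasDerivAt_id u).const_sub (-a)).div_const σ
  have h1 := (Phi_hasDeriv ((a - u) / σ)).comp u hr
  have h2 := (Phi_hasDeriv ((-a - u) / σ)).comp u hl
  have h := h1.sub h2
  refine h.congr_deriv ?_
  field_simp
  ring

lemma d1_hasDeriv {σ a : ℝ} (hσ : 0 < σ) (u : ℝ) :
    HasDerivAt (fun u => (phi ((-a - u) / σ) - phi ((a - u) / σ)) / σ)
      ((((-a - u) / σ) * phi ((-a - u) / σ)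
        - ((a - u) / σ) * phi ((a - u) / σ)) / σ ^ 2) u := by
  have hr : HasDerivAt (fun u : ℝ => (a - u) / σ) (-1 / σ) u :=
    ((hasDerivAt_id u).const_sub a).div_const σ
  have hl : HasDerivAt (fun u : ℝ => (-a - u) / σ) (-1 / σ) u :=
    ((hasDerivAt_id u).const_sub (-a)).div_const σ
  have h1 := (phi_hasDeriv ((-a - u) / σ)).comp u hl
  have h2 := (phi_hasDeriv ((a - u) / σ)).comp u hr
  have h := (h1.sub h2).div_const σ
  refine h.congr_deriv ?_
  field_simp

lemma log_delta_concave {σ a : ℝ} (hσ : 0 < σ) (ha : 0 < a) :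
    ConcaveOn ℝ Set.univ (fun u => Real.log (Δ a σ u)) := by
  set d1 : ℝ → ℝ := fun u => (phi ((-a - u) / σ) - phi ((a - u) / σ)) / σ with hd1
  set d2 : ℝ → ℝ := fun u => (((-a - u) / σ) * phi ((-a - u) / σ)
        - ((a - u) / σ) * phi ((a - u) / σ)) / σ ^ 2 with hd2
  have hG1 : ∀ u : ℝ, HasDerivAt (fun u => Real.log (Δ a σ u)) (d1 u / Δ a σ u) u :=
    fun u => (delta_hasDeriv hσ u).log (delta_pos hσ ha u).ne'
  have hG2 : ∀ u : ℝ, HasDerivAt (fun u => d1 u / Δ a σ u)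
      ((d2 u * Δ a σ u - d1 u * d1 u) / Δ a σ u ^ 2) u :=
    fun u => (d1_hasDeriv hσ u).div (delta_hasDeriv hσ u) (delta_pos hσ ha u).ne'
  have hnonpos : ∀ u : ℝ, (d2 u * Δ a σ u - d1 u * d1 u) / Δ a σ u ^ 2 ≤ 0 := by
    intro u
    apply div_nonpos_of_nonpos_of_nonneg _ (sq_nonneg _)
    have hkey := key_ineq (lr_lt hσ ha u)
    have hΔ : Δ a σ u = Phi ((a - u) / σ) - Phi ((-a - u) / σ) := rfl
    have e1 : d2 u * Δ a σ u = (((-a - u) / σ) * phi ((-a - u) / σ)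
        - ((a - u) / σ) * phi ((a - u) / σ))
        * (Phi ((a - u) / σ) - Phi ((-a - u) / σ)) / σ ^ 2 := by
      rw [hd2, hΔ]; ring
    have e2 : d1 u * d1 u = (phi ((-a - u) / σ) - phi ((a - u) / σ)) ^ 2 / σ ^ 2 := by
      rw [hd1]; field_simp
    rw [e1, e2]
    have hσ2 : (0:ℝ) < σ ^ 2 := by positivity
    rw [div_sub_div_same, div_nonpos_iff]
    right
    exact ⟨by linarith, hσ2.le⟩
  refine concaveOn_of_hasDerivWithinAt2_nonpos convex_univ
    (f' := fun u => d1 u / Δ a σ u)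
    (f'' := fun u => (d2 u * Δ a σ u - d1 u * d1 u) / Δ a σ u ^ 2)
    (fun u _ => (hG1 u).continuousAt.continuousWithinAt)
    (fun u _ => (hG1 u).hasDerivWithinAt)
    (fun u _ => (hG2 u).hasDerivWithinAt)
    (fun u _ => hnonpos u)

/-- The Rényi divergence of order `α` between two truncated Gaussians is at most
that between the corresponding Gaussians: `Δ(θ+c)^{α−1} Δ(θ+(1−α)c) ≤ Δ(θ)^α`. -/
theorem truncated_gaussian_renyi_amplification (α σ a θ c : ℝ)
    (hα : 1 < α) (hσ : 0 < σ) (ha : 0 < a) :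
    Δ a σ (θ + c) ^ (α - 1) * Δ a σ (θ + (1 - α) * c) ≤ Δ a σ θ ^ α := by
  have hα0 : 0 < α := by linarith
  set x := θ + c with hx
  set y := θ + (1 - α) * c with hy
  have hcomb : ((α - 1) / α) • x + (1 / α) • y = θ := by
    simp only [smul_eq_mul, hx, hy]
    field_simp
    ring
  have hw1 : (0:ℝ) ≤ (α - 1) / α := div_nonneg (by linarith) hα0.le
  have hw2 : (0:ℝ) ≤ 1 / α := by positivity
  have hw : (α - 1) / α + 1 / α = 1 := by field_simp; ring
  have hconc := (log_delta_concave hσ ha).2 (Set.mem_univ x) (Set.mem_univ y) hw1 hw2 hw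
  rw [hcomb] at hconc
  simp only [smul_eq_mul] at hconc
  have hA := delta_pos hσ ha x
  have hB := delta_pos hσ ha y
  have hT := delta_pos hσ ha θ
  have h2 : (α - 1) * Real.log (Δ a σ x) + Real.log (Δ a σ y)
      ≤ α * Real.log (Δ a σ θ) := by
    have h3 := mul_le_mul_of_nonneg_left hconc hα0.le
    have e : α * ((α - 1) / α * Real.log (Δ a σ x) + 1 / α * Real.log (Δ a σ y))
        = (α - 1) * Real.log (Δ a σ x) + Real.log (Δ a σ y) := by
      field_simp
    rw [e] at h3
    exact h3
  rw [Real.rpow_def_of_pos hA, Real.rpow_def_of_pos hT,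
    ← Real.exp_log hB, ← Real.exp_add, Real.exp_le_exp]
  linarith
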